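/- Let A be a contracting real n×n matrix and let W be any real n×n matrix. Then the series Z := ∑_{i=0}^∞ (Aᵀ)ⁱ W Aⁱ converges (the family is summable in the space of real n×n matrices), Z satisfies the Stein equation AᵀZA − Z = −W, and Z is the unique real n×n matrix satisfying this equation. Moreover, if W is symmetric positive definite then Z is symmetric positive definite. -/

import Mathlib

open Matrix

/-- A real square matrix is contracting if every complex root of its characteristic
polynomial has absolute value strictly less than `1`. -/
def Contracting {n : ℕ} (A : Matrix (Fin n) (Fin n) ℝ) : Prop :=
  ∀ μ : ℂ, (A.map (algebraMap ℝ ℂ)).charpoly.IsRoot μ → ‖μ‖ < 1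

section
attribute [local instance] Matrix.linftyOpNormedRing Matrix.linftyOpNormedAlgebra

lemma contracting_bound {n : ℕ} {A : Matrix (Fin n) (Fin n) ℝ} (hA : Contracting A) :
    ∃ C r : ℝ, 0 ≤ C ∧ 0 ≤ r ∧ r < 1 ∧ ∀ (k : ℕ) (i j : Fin n), |(A ^ k) i j| ≤ C * r ^ k := by
  set B : Matrix (Fin n) (Fin n) ℂ := A.map (algebraMap ℝ ℂ) with hB
  -- spectrum → root
  have hroot : ∀ μ ∈ spectrum ℂ B, B.charpoly.IsRoot μ := by
    intro μ h
    rw [spectrum.mem_iff] at h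
    rw [Matrix.isUnit_iff_isUnit_det, isUnit_iff_ne_zero, not_not] at h
    have : B.charpoly.eval μ = ((algebraMap ℂ (Matrix (Fin n) (Fin n) ℂ)) μ - B).det := by
      rw [Matrix.charpoly, ← Polynomial.coe_evalRingHom, RingHom.map_det]
      congr 1
      ext i j
      by_cases hij : i = j <;>
        simp [hij, Matrix.charmatrix_apply, Matrix.algebraMap_matrix_apply, Matrix.diagonal_apply]
    exact this.trans h
  -- spectral radius < 1
  have hrad : spectralRadius ℂ B < 1 := by
    set S := B.charpoly.roots.toFinset with hS
    have hsup : S.sup (fun μ => ‖μ‖₊) < 1 := by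
      rw [Finset.sup_lt_iff (by norm_num : (⊥ : NNReal) < 1)]
      intro μ hμ
      have hroot2 : B.charpoly.IsRoot μ := by
        rw [hS, Multiset.mem_toFinset] at hμ
        exact (Polynomial.mem_roots (Matrix.charpoly_monic B).ne_zero).mp hμ
      have habs := hA μ hroot2
      rw [← NNReal.coe_lt_coe]
      simpa [coe_nnnorm] using habs
    calc spectralRadius ℂ B ≤ ((S.sup (fun μ => ‖μ‖₊) : NNReal) : ENNReal) := by
            rw [spectralRadius]
            apply iSup₂_le
            intro μ hμ
            have hr := hroot μ hμ
            have : μ ∈ S := by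
              rw [hS, Multiset.mem_toFinset, Polynomial.mem_roots (Matrix.charpoly_monic B).ne_zero]
              exact hr
            exact_mod_cast ENNReal.coe_le_coe.mpr (Finset.le_sup this)
      _ < 1 := by exact_mod_cast hsup
  -- Gelfand
  have hgel := spectrum.pow_nnnorm_pow_one_div_tendsto_nhds_spectralRadius B
  obtain ⟨ρ, hρ1, hρ2⟩ := ENNReal.lt_iff_exists_nnreal_btwn.mp hrad
  have hev : ∀ᶠ k : ℕ in Filter.atTop, ((‖B ^ k‖₊ : ENNReal) ^ (1 / (k : ℝ))) < ρ :=
    hgel.eventually_lt_const hρ1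
  obtain ⟨N₀, hN₀⟩ := Filter.eventually_atTop.mp hev
  set r : NNReal := max ρ (1/2) with hr
  have hrpos : (0:NNReal) < r := lt_of_lt_of_le (by norm_num) (le_max_right _ _)
  have hrlt1 : r < 1 := by
    have h12 : (1/2 : NNReal) < 1 := by
      rw [← NNReal.coe_lt_coe]; norm_num
    exact max_lt (by exact_mod_cast hρ2) h12
  set N := max N₀ 1 with hN
  have hbig : ∀ k ≥ N, ‖B ^ k‖₊ ≤ r ^ k := by
    intro k hk
    have hk1 : 1 ≤ k := le_trans (le_max_right _ _) hk
    have hkN₀ : N₀ ≤ k := le_trans (le_max_left _ _) hk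
    have h1 := hN₀ k hkN₀
    have hkne : (k : ℝ) ≠ 0 := by positivity
    have h2 : ((‖B ^ k‖₊ : ENNReal) ^ (1 / (k:ℝ))) ^ (k:ℝ) ≤ ((ρ : ENNReal)) ^ (k:ℝ) :=
      ENNReal.rpow_le_rpow h1.le (by positivity)
    rw [← ENNReal.rpow_mul, one_div_mul_cancel hkne, ENNReal.rpow_one,
      ENNReal.rpow_natCast, ← ENNReal.coe_pow, ENNReal.coe_le_coe] at h2
    exact le_trans h2 (pow_le_pow_left' (le_max_left _ _) k)
  -- build C
  set rr : ℝ := (r : ℝ) with hrr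
  have hrr0 : 0 < rr := hrpos
  have hrr1 : rr < 1 := hrlt1
  set C : ℝ := 1 + ∑ k ∈ Finset.range N, ‖B ^ k‖ / rr ^ k with hC
  have hCge1 : 1 ≤ C := by
    rw [hC]
    have : (0:ℝ) ≤ ∑ k ∈ Finset.range N, ‖B ^ k‖ / rr ^ k :=
      Finset.sum_nonneg fun k _ => by positivity
    linarith
  have hnorm : ∀ k : ℕ, ‖B ^ k‖ ≤ C * rr ^ k := by
    intro k
    rcases lt_or_ge k N with hlt | hge
    · have h1 : ‖B ^ k‖ / rr ^ k ≤ C := by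
        rw [hC]
        have := Finset.single_le_sum (f := fun k => ‖B ^ k‖ / rr ^ k)
          (fun i _ => by positivity) (Finset.mem_range.mpr hlt)
        linarith
      calc ‖B ^ k‖ = (‖B ^ k‖ / rr ^ k) * rr ^ k := by field_simp
        _ ≤ C * rr ^ k := by
            apply mul_le_mul_of_nonneg_right h1 (by positivity)
    · have h1 : ‖B ^ k‖ ≤ rr ^ k := by
        have := hbig k hge
        have h2 : (‖B ^ k‖₊ : ℝ) ≤ ((r ^ k : NNReal) : ℝ) := by exact_mod_cast this
        simpa [coe_nnnorm] using h2
      calc ‖B ^ k‖ ≤ rr ^ k := h1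
        _ ≤ C * rr ^ k := le_mul_of_one_le_left (by positivity) hCge1
  refine ⟨C, rr, le_trans zero_le_one hCge1, hrr0.le, hrr1, ?_⟩
  intro k i j
  have hmap : B ^ k = (A ^ k).map (algebraMap ℝ ℂ) := by
    rw [hB]
    have : A.map (algebraMap ℝ ℂ) = (algebraMap ℝ ℂ).mapMatrix A := rfl
    rw [this, ← map_pow]
    rfl
  have hentry : |(A ^ k) i j| = ‖(B ^ k) i j‖ := by
    rw [hmap]
    simp [Matrix.map_apply, Real.norm_eq_abs]
  have hle : ‖(B ^ k) i j‖ ≤ ‖B ^ k‖ := by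
    have h1 : ‖(B ^ k) i j‖₊ ≤ ‖B ^ k‖₊ := by
      rw [Matrix.linfty_opNNNorm_def]
      exact le_trans (Finset.single_le_sum (f := fun j' => ‖(B ^ k) i j'‖₊) (fun j' _ => zero_le) (Finset.mem_univ j))
        (Finset.le_sup (f := fun i => ∑ j, ‖(B ^ k) i j‖₊) (Finset.mem_univ i))
    exact_mod_cast h1
  rw [hentry]
  exact le_trans hle (hnorm k)

end

theorem stmt5 (n : ℕ) (A W : Matrix (Fin n) (Fin n) ℝ) (hA : Contracting A) :
    ∃ Z : Matrix (Fin n) (Fin n) ℝ,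
      HasSum (fun i : ℕ => Aᵀ ^ i * W * A ^ i) Z ∧
      Aᵀ * Z * A - Z = -W ∧
      (∀ Z' : Matrix (Fin n) (Fin n) ℝ, Aᵀ * Z' * A - Z' = -W → Z' = Z) ∧
      (W.PosDef → Z.PosDef) := by
  obtain ⟨C, r, hC0, hr0, hr1, hb⟩ := contracting_bound hA
  set T : ℕ → Matrix (Fin n) (Fin n) ℝ := fun k => Aᵀ ^ k * W * A ^ k with hT
  -- entrywise bound for powers sandwiching any matrix M
  have keyM : ∀ (M : Matrix (Fin n) (Fin n) ℝ) (k : ℕ) (p q : Fin n),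
      |(Aᵀ ^ k * M * A ^ k) p q| ≤ C ^ 2 * (∑ b, ∑ a, |M a b|) * (r ^ 2) ^ k := by
    intro M k p q
    have happ : (Aᵀ ^ k * M * A ^ k) p q
        = ∑ b, (∑ a, (A ^ k) a p * M a b) * (A ^ k) b q := by
      simp only [Matrix.mul_apply]
      refine Finset.sum_congr rfl fun b _ => ?_
      congr 1
      refine Finset.sum_congr rfl fun a _ => ?_
      rw [← Matrix.transpose_pow, Matrix.transpose_apply]
    rw [happ]
    calc |∑ b, (∑ a, (A ^ k) a p * M a b) * (A ^ k) b q|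
        ≤ ∑ b, |(∑ a, (A ^ k) a p * M a b) * (A ^ k) b q| :=
          Finset.abs_sum_le_sum_abs _ _
      _ ≤ ∑ b, ∑ a, |(A ^ k) a p| * |M a b| * |(A ^ k) b q| := by
          refine Finset.sum_le_sum fun b _ => ?_
          rw [abs_mul]
          refine le_trans (mul_le_mul_of_nonneg_right
            (Finset.abs_sum_le_sum_abs _ _) (abs_nonneg _)) ?_
          rw [Finset.sum_mul]
          exact Finset.sum_le_sum fun a _ => by rw [abs_mul]
      _ ≤ ∑ b, ∑ a, (C * r ^ k) * |M a b| * (C * r ^ k) := by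
          refine Finset.sum_le_sum fun b _ => Finset.sum_le_sum fun a _ => ?_
          have h1 := hb k a p
          have h2 := hb k b q
          have hnn : (0:ℝ) ≤ |M a b| := abs_nonneg _
          have h3 : |(A ^ k) a p| * |M a b| ≤ (C * r ^ k) * |M a b| :=
            mul_le_mul_of_nonneg_right h1 hnn
          exact mul_le_mul h3 h2 (abs_nonneg _) (by positivity)
      _ = C ^ 2 * (∑ b, ∑ a, |M a b|) * (r ^ 2) ^ k := by
          have hc : ∀ a b : Fin n, (C * r ^ k) * |M a b| * (C * r ^ k)
              = (C ^ 2 * (r ^ 2) ^ k) * |M a b| := fun a b => by ring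
          simp_rw [hc, ← Finset.mul_sum]
          ring
  set S : ℝ := ∑ b, ∑ a, |W a b| with hS
  have hr2 : (0:ℝ) ≤ r ^ 2 := by positivity
  have hr21 : r ^ 2 < 1 := by nlinarith
  have hgeom : Summable (fun k : ℕ => C ^ 2 * S * (r ^ 2) ^ k) :=
    (summable_geometric_of_lt_one hr2 hr21).mul_left _
  -- summability of T
  have hsT : Summable T := by
    apply Pi.summable.mpr
    intro p
    apply Pi.summable.mpr
    intro q
    refine Summable.of_norm_bounded hgeom ?_
    intro k
    simpa [Real.norm_eq_abs] using keyM W k p q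
  set Z : Matrix (Fin n) (Fin n) ℝ := ∑' k, T k with hZ
  have hZsum : HasSum T Z := hsT.hasSum
  have hstein : Aᵀ * Z * A - Z = -W := by
    have hcont : Continuous (fun M : Matrix (Fin n) (Fin n) ℝ => Aᵀ * M * A) :=
      (continuous_const.matrix_mul continuous_id).matrix_mul continuous_const
    have hmap : HasSum (fun k => Aᵀ * T k * A) (Aᵀ * Z * A) := by
      have := hZsum.map (AddMonoidHom.mk' (fun M : Matrix (Fin n) (Fin n) ℝ => Aᵀ * M * A)
        (fun M N => by noncomm_ring)) hcont
      simpa [Function.comp_def] using this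
    have hshift : (fun k => Aᵀ * T k * A) = fun k => T (k + 1) := by
      funext k
      show Aᵀ * (Aᵀ ^ k * W * A ^ k) * A = Aᵀ ^ (k + 1) * W * A ^ (k + 1)
      rw [pow_succ A k, pow_succ' Aᵀ k]
      noncomm_ring
    rw [hshift] at hmap
    have h2 : HasSum (fun k => T (k + 1)) (Z - ∑ i ∈ Finset.range 1, T i) :=
      (hasSum_nat_add_iff' 1).mpr hZsum
    have h3 : Aᵀ * Z * A = Z - ∑ i ∈ Finset.range 1, T i := hmap.unique h2
    have hT0 : T 0 = W := by show Aᵀ ^ 0 * W * A ^ 0 = W; simp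
    rw [Finset.sum_range_one, hT0] at h3
    rw [h3]
    abel
  refine ⟨Z, hZsum, hstein, ?_, ?_⟩
  -- uniqueness
  · intro Z' hZ'
    set D : Matrix (Fin n) (Fin n) ℝ := Z' - Z with hD
    have hDfix : Aᵀ * D * A = D := by
      have h1 : Aᵀ * D * A - D = (Aᵀ * Z' * A - Z') - (Aᵀ * Z * A - Z) := by
        rw [hD]; noncomm_ring
      rw [hZ', hstein, sub_self] at h1
      exact sub_eq_zero.mp h1
    have hiter : ∀ k, Aᵀ ^ k * D * A ^ k = D := by
      intro k
      induction k with
      | zero => simp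
      | succ k ih =>
        have hre : Aᵀ ^ (k + 1) * D * A ^ (k + 1) = Aᵀ ^ k * (Aᵀ * D * A) * A ^ k := by
          rw [pow_succ Aᵀ k, pow_succ' A k]
          noncomm_ring
        rw [hre, hDfix, ih]
    have hD0 : D = 0 := by
      ext p q
      have hb2 : ∀ k, |D p q| ≤ C ^ 2 * (∑ b, ∑ a, |D a b|) * (r ^ 2) ^ k := by
        intro k
        have := keyM D k p q
        rwa [hiter k] at this
      have htend : Filter.Tendsto (fun k : ℕ => C ^ 2 * (∑ b, ∑ a, |D a b|) * (r ^ 2) ^ k)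
          Filter.atTop (nhds 0) := by
        have := (tendsto_pow_atTop_nhds_zero_of_lt_one hr2 hr21).const_mul
          (C ^ 2 * (∑ b, ∑ a, |D a b|))
        simpa using this
      have hle : |D p q| ≤ 0 := ge_of_tendsto' htend hb2
      have := abs_nonpos_iff.mp hle
      simpa using this
    rw [hD] at hD0
    exact sub_eq_zero.mp hD0
  -- positive definiteness
  · intro hW
    have hWs : Wᵀ = W := by
      have h := hW.1
      rw [Matrix.IsHermitian] at h
      conv_rhs => rw [← h]
      ext i j
      simp [Matrix.conjTranspose_apply]
    refine Matrix.PosDef.of_dotProduct_mulVec_pos ?_ ?_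
    · -- Hermitian
      have htr : HasSum (fun k => (T k)ᵀ) Zᵀ := hZsum.matrix_transpose
      have heq : (fun k => (T k)ᵀ) = T := by
        funext k
        show (Aᵀ ^ k * W * A ^ k)ᵀ = Aᵀ ^ k * W * A ^ k
        have h1 : (Aᵀ) ^ k = (A ^ k)ᵀ := (Matrix.transpose_pow A k).symm
        rw [h1, Matrix.transpose_mul, Matrix.transpose_mul, Matrix.transpose_transpose, hWs,
          Matrix.mul_assoc]
      rw [heq] at htr
      have hZt : Zᵀ = Z := htr.unique hZsum
      show Zᴴ = Z
      conv_rhs => rw [← hZt]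
      ext i j
      simp [Matrix.conjTranspose_apply]
    · intro x hx
      have hφc : Continuous (fun M : Matrix (Fin n) (Fin n) ℝ => dotProduct (star x) (M *ᵥ x)) :=
        continuous_const.dotProduct (continuous_id.matrix_mulVec continuous_const)
      have hsx : HasSum (fun k => dotProduct (star x) (T k *ᵥ x)) (dotProduct (star x) (Z *ᵥ x)) := by
        have := hZsum.map (AddMonoidHom.mk'
          (fun M : Matrix (Fin n) (Fin n) ℝ => dotProduct (star x) (M *ᵥ x))
          (fun M N => by simp [Matrix.add_mulVec, dotProduct_add])) hφc
        simpa [Function.comp_def] using this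
      have hterm : ∀ k, dotProduct (star x) (T k *ᵥ x)
          = dotProduct (star (A ^ k *ᵥ x)) (W *ᵥ (A ^ k *ᵥ x)) := by
        intro k
        show dotProduct (star x) ((Aᵀ ^ k * W * A ^ k) *ᵥ x) = _
        rw [← Matrix.mulVec_mulVec, ← Matrix.mulVec_mulVec, ← Matrix.transpose_pow]
        rw [star_trivial, star_trivial, Matrix.dotProduct_mulVec, Matrix.vecMul_transpose]
      have hnonneg : ∀ k, 0 ≤ dotProduct (star x) (T k *ᵥ x) := by
        intro k
        rw [hterm k]
        exact hW.posSemidef.dotProduct_mulVec_nonneg (A ^ k *ᵥ x)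
      have hpos0 : 0 < dotProduct (star x) (T 0 *ᵥ x) := by
        rw [hterm 0]
        have h0 : A ^ 0 *ᵥ x = x := by simp [Matrix.one_mulVec]
        rw [h0]
        exact hW.dotProduct_mulVec_pos hx
      exact lt_of_lt_of_le hpos0 (le_hasSum hsx 0 fun j _ => hnonneg j)
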